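/- The 5-dimensional nilpotent commutative associative algebra A₀₇ does not degenerate to A₂₁: the structure λ of A₂₁ does NOT lie in the closure of the GL(5,ℂ)-orbit O(μ) of the structure μ of A₀₇ (closure in the standard topology on the space of bilinear maps ℂ⁵ × ℂ⁵ → ℂ⁵). -/

import Mathlib

open ContinuousLinearMap

/-- The underlying space `ℂⁿ`. -/
abbrev Vn (n : ℕ) := Fin n → ℂ

/-- The space of bilinear maps `ℂⁿ × ℂⁿ → ℂⁿ` (as continuous linear maps in two
arguments), carrying its standard topology as a finite-dimensional complex vector space. -/
abbrev Bil (n : ℕ) := Vn n →L[ℂ] Vn n →L[ℂ] Vn n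

/-- The action of `GL(n, ℂ)` on bilinear maps: `(g · μ)(x, y) = g (μ (g⁻¹ x) (g⁻¹ y))`. -/
noncomputable def act {n : ℕ} (g : Vn n ≃L[ℂ] Vn n) (μ : Bil n) : Bil n :=
  ((compL ℂ (Vn n) (Vn n) (Vn n)).flip (g.symm : Vn n →L[ℂ] Vn n)).comp
    (((compL ℂ (Vn n) (Vn n) (Vn n)) (g : Vn n →L[ℂ] Vn n)).comp
      (μ.comp (g.symm : Vn n →L[ℂ] Vn n)))

@[simp] lemma act_apply {n : ℕ} (g : Vn n ≃L[ℂ] Vn n) (μ : Bil n) (x y : Vn n) :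
    act g μ x y = g (μ (g.symm x) (g.symm y)) := rfl

/-- The orbit `O(μ)` of a bilinear map under the `GL(n, ℂ)`-action. -/
noncomputable def orbit {n : ℕ} (μ : Bil n) : Set (Bil n) :=
  {ν | ∃ g : Vn n ≃L[ℂ] Vn n, ν = act g μ}

/-- The standard basis `e₁, …, e₅` of `ℂ⁵` (zero-indexed: `e i` is `e_{i+1}`). -/
def e (i : Fin 5) : Vn 5 := Pi.single i 1

/-- Multiplication table of the algebra `𝐀07` (entry `(i, j)` is `eᵢ · eⱼ`). -/
def tblA07 : Fin 5 → Fin 5 → Vn 5 :=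
  ![![0, e 3 + e 4, e 3, 0, 0],
   ![e 3 + e 4, 0, e 4, 0, 0],
   ![e 3, e 4, 0, 0, 0],
   ![0, 0, 0, 0, 0],
   ![0, 0, 0, 0, 0]]

/-- Multiplication table of the algebra `𝐀21` (entry `(i, j)` is `eᵢ · eⱼ`). -/
def tblA21 : Fin 5 → Fin 5 → Vn 5 :=
  ![![0, 0, 0, e 4, 0],
   ![0, 0, e 4, 0, 0],
   ![0, e 4, 0, 0, 0],
   ![e 4, 0, 0, 0, 0],
   ![0, 0, 0, 0, 0]]

/-- The determinant invariant: a 4×4 minor of the matrix of the pairing `(x,y) ↦ ν x y 4`. -/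
noncomputable def Finv (ν : Bil 5) : ℂ :=
  Matrix.det (Matrix.of fun i j : Fin 4 => ν (e i.castSucc) (e j.castSucc) 4)

lemma Finv_continuous : Continuous Finv := by
  apply Continuous.matrix_det
  apply continuous_matrix
  intro i j
  exact (continuous_apply (4 : Fin 5)).comp
    (((ContinuousLinearMap.apply ℂ (Vn 5) (e j.castSucc)).continuous).comp
      ((ContinuousLinearMap.apply ℂ (Vn 5 →L[ℂ] Vn 5) (e i.castSucc)).continuous))

lemma eBasis : ⇑(Pi.basisFun ℂ (Fin 5)) = e := funext fun i => by
  simp [e, Pi.basisFun_apply]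

lemma e34_indep : LinearIndependent ℂ ![e 3, e 4] := by
  rw [linearIndependent_fin2]
  constructor
  · intro h
    have := congrFun h 4
    simp [e, Pi.single_apply] at this
  · intro a h
    have := congrFun h 3
    simp [e, Pi.single_apply] at this

lemma mu_right_zero (μ : Bil 5) (hμ : ∀ i j : Fin 5, μ (e i) (e j) = tblA07 i j)
    (x : Vn 5) (k : Fin 5) (hk : k = 3 ∨ k = 4) : μ x (e k) = 0 := by
  have hx : x = ∑ i, x i • e i := by
    simpa [eBasis, e] using ((Pi.basisFun ℂ (Fin 5)).sum_repr x).symm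
  rw [hx]
  simp only [map_sum, map_smul, ContinuousLinearMap.coe_sum', Finset.sum_apply,
    ContinuousLinearMap.coe_smul', Pi.smul_apply, hμ]
  apply Finset.sum_eq_zero
  intro i _
  have : tblA07 i k = 0 := by rcases hk with rfl | rfl <;> fin_cases i <;> rfl
  rw [this, smul_zero]

lemma Finv_orbit (μ : Bil 5) (hμ : ∀ i j : Fin 5, μ (e i) (e j) = tblA07 i j)
    (ν : Bil 5) (hν : ν ∈ orbit μ) : Finv ν = 0 := by
  obtain ⟨g, rfl⟩ := hν
  set ν := act g μ with hdef
  by_contra hdet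
  -- the linear map y ↦ (ν (e i) y 4)_{i < 4}
  set L : Vn 5 →ₗ[ℂ] (Fin 4 → ℂ) :=
    LinearMap.pi (fun i : Fin 4 =>
      (LinearMap.proj (4 : Fin 5)).comp (ν (e i.castSucc) : Vn 5 →ₗ[ℂ] Vn 5)) with hL
  have hLapp : ∀ (y : Vn 5) (i : Fin 4), L y i = ν (e i.castSucc) y 4 := fun y i => rfl
  -- L is surjective since the minor is invertible
  have hN : IsUnit (Matrix.of fun i j : Fin 4 => ν (e i.castSucc) (e j.castSucc) 4) := by
    rw [Matrix.isUnit_iff_isUnit_det]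
    exact Ne.isUnit hdet
  have hsurj : Function.Surjective L := by
    intro c
    obtain ⟨d, hd⟩ := (Matrix.mulVec_surjective_iff_isUnit.mpr hN) c
    refine ⟨∑ j, d j • e j.castSucc, ?_⟩
    funext i
    rw [hLapp]
    calc ν (e i.castSucc) (∑ j, d j • e j.castSucc) 4
        = ∑ j, d j * ν (e i.castSucc) (e j.castSucc) 4 := by
          simp [Finset.sum_apply, mul_comm]
      _ = c i := by
          rw [← hd]
          simp [Matrix.mulVec, dotProduct, mul_comm]
  -- kernel contains two independent vectors
  have hker : ∀ k : Fin 5, k = 3 ∨ k = 4 → g (e k) ∈ LinearMap.ker L := by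
    intro k hk
    rw [LinearMap.mem_ker]
    funext i
    rw [hLapp, hdef, act_apply, g.symm_apply_apply, mu_right_zero μ hμ _ k hk]
    simp
  have hind : LinearIndependent ℂ ![g (e 3), g (e 4)] := by
    have := e34_indep.map' (g : Vn 5 →L[ℂ] Vn 5).toLinearMap
      (LinearMap.ker_eq_bot.mpr g.injective)
    convert this using 1
    funext i
    fin_cases i <;> rfl
    all_goals rfl
  have hind' : LinearIndependent ℂ (fun i : Fin 2 =>
      (⟨![g (e 3), g (e 4)] i, by fin_cases i
                                  · exact hker 3 (Or.inl rfl)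
                                  · exact hker 4 (Or.inr rfl)⟩ : LinearMap.ker L)) := by
    apply LinearIndependent.of_comp (LinearMap.ker L).subtype
    convert hind using 1
    funext i
    rfl
  have hcard : 2 ≤ Module.finrank ℂ (LinearMap.ker L) := by
    simpa using hind'.fintype_card_le_finrank
  have hrk := LinearMap.finrank_range_add_finrank_ker L
  rw [LinearMap.range_eq_top.mpr hsurj] at hrk
  simp [finrank_top, Module.finrank_pi] at hrk
  omega

/-- The $5$-dimensional nilpotent commutative associative algebra `𝐀07` does not degenerate to
`𝐀21`: the structure `λ` of `𝐀21` does NOT lie in the closure of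
the `GL(5, ℂ)`-orbit `O(μ)` of the structure `μ` of `𝐀07`. -/
theorem A07_not_deg_A21 (μ lam : Bil 5)
    (hμ : ∀ i j : Fin 5, μ (e i) (e j) = tblA07 i j)
    (hlam : ∀ i j : Fin 5, lam (e i) (e j) = tblA21 i j) :
    lam ∉ closure (orbit μ) := by
  intro h
  have hsub : closure (orbit μ) ⊆ Finv ⁻¹' {0} :=
    closure_minimal (fun ν hν => Finv_orbit μ hμ ν hν)
      (isClosed_singleton.preimage Finv_continuous)
  have h0 : Finv lam = 0 := hsub h
  have h1 : Finv lam = 1 := by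
    unfold Finv
    have hM : (Matrix.of fun i j : Fin 4 => lam (e i.castSucc) (e j.castSucc) 4) =
        !![0,0,0,1; 0,0,1,0; 0,1,0,0; 1,0,0,0] := by
      funext i j
      rw [Matrix.of_apply, hlam]
      fin_cases i <;> fin_cases j <;>
        norm_num [tblA21, e, Pi.single_apply, Matrix.vecHead, Matrix.vecTail]
    rw [hM]
    have h2 : (Fin.castSucc 2 : Fin 4) = 2 := rfl
    have h1 : (Fin.castSucc 1 : Fin 4) = 1 := rfl
    have h0 : (Fin.castSucc 0 : Fin 4) = 0 := rfl
    simp [Matrix.det_succ_row_zero, Fin.sum_univ_succ, h0, h1, h2]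
    norm_num [show (Fin.succAbove 3 2 : Fin 4) = 2 from rfl]
    rfl
  rw [h0] at h1
  exact one_ne_zero h1.symm
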